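/- For real numbers a₁, a₂ > 0 and b₁, b₂ > 0, ∫_0^∞ ∫_0^∞ e^{−b₁ x − b₂ y} / (a₁ x + a₂ y) dx dy = ∫_0^∞ 1 / ((a₁ x + b₁)(a₂ x + b₂)) dx. -/

import Mathlib

open MeasureTheory Real Set

lemma exp_int (s : ℝ) (hs : 0 < s) :
    ∫ x in Ioi (0:ℝ), Real.exp (-(s * x)) = 1 / s := by
  have h := integral_comp_mul_left_Ioi (fun u => Real.exp (-u)) 0 hs
  simp only [mul_zero] at h
  rw [h, integral_exp_neg_Ioi_zero, smul_eq_mul, mul_one, one_div]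

lemma lint_exp (s : ℝ) (hs : 0 < s) :
    ∫⁻ x in Ioi (0:ℝ), ENNReal.ofReal (Real.exp (-(s * x))) = ENNReal.ofReal (1/s) := by
  rw [← exp_int s hs, ofReal_integral_eq_lintegral_ofReal]
  · have := exp_neg_integrableOn_Ioi 0 hs; simp only [neg_mul] at this; exact this
  · exact Filter.Eventually.of_forall fun x => (exp_pos _).le

lemma pointA (a₁ a₂ b₁ b₂ x y : ℝ) (ha₁ : 0 < a₁) (ha₂ : 0 < a₂)
    (hb₁ : 0 < b₁) (hb₂ : 0 < b₂) (hx : 0 < x) (hy : 0 < y) :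
    ENNReal.ofReal (Real.exp (-b₁*x - b₂*y) / (a₁*x + a₂*y)) =
    ∫⁻ t in Ioi (0:ℝ),
      ENNReal.ofReal (Real.exp (-((b₁+a₁*t)*x)) * Real.exp (-((b₂+a₂*t)*y))) := by
  have hc : 0 < a₁*x + a₂*y := by positivity
  have hp : ∀ t : ℝ, Real.exp (-((b₁+a₁*t)*x)) * Real.exp (-((b₂+a₂*t)*y))
      = Real.exp (-b₁*x - b₂*y) * Real.exp (-((a₁*x+a₂*y)*t)) := by
    intro t; rw [← Real.exp_add, ← Real.exp_add]; ring_nf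
  simp_rw [hp, ENNReal.ofReal_mul (exp_pos _).le,
    lintegral_const_mul' _ _ ENNReal.ofReal_ne_top, lint_exp _ hc,
    ← ENNReal.ofReal_mul (exp_pos _).le, mul_one_div]

lemma key (a₁ a₂ b₁ b₂ : ℝ) (ha₁ : 0 < a₁) (ha₂ : 0 < a₂)
    (hb₁ : 0 < b₁) (hb₂ : 0 < b₂) :
    ∫⁻ y in Ioi (0:ℝ), ∫⁻ x in Ioi (0:ℝ),
        ENNReal.ofReal (Real.exp (-b₁*x - b₂*y) / (a₁*x + a₂*y))
      = ∫⁻ x in Ioi (0:ℝ), ENNReal.ofReal (1/((a₁*x+b₁)*(a₂*x+b₂))) := by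
  have step1 : ∫⁻ y in Ioi (0:ℝ), ∫⁻ x in Ioi (0:ℝ),
      ENNReal.ofReal (Real.exp (-b₁*x - b₂*y) / (a₁*x + a₂*y))
      = ∫⁻ y in Ioi (0:ℝ), ∫⁻ t in Ioi (0:ℝ),
          ENNReal.ofReal (1/(b₁+a₁*t)) * ENNReal.ofReal (Real.exp (-((b₂+a₂*t)*y))) := by
    refine setLIntegral_congr_fun measurableSet_Ioi ?_
    intro y hy
    calc ∫⁻ x in Ioi (0:ℝ), ENNReal.ofReal (Real.exp (-b₁*x - b₂*y) / (a₁*x + a₂*y))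
        = ∫⁻ x in Ioi (0:ℝ), ∫⁻ t in Ioi (0:ℝ),
            ENNReal.ofReal (Real.exp (-((b₁+a₁*t)*x)) * Real.exp (-((b₂+a₂*t)*y))) := by
          refine setLIntegral_congr_fun measurableSet_Ioi ?_
          intro x hx
          exact pointA a₁ a₂ b₁ b₂ x y ha₁ ha₂ hb₁ hb₂ hx hy
      _ = ∫⁻ t in Ioi (0:ℝ), ∫⁻ x in Ioi (0:ℝ),
            ENNReal.ofReal (Real.exp (-((b₁+a₁*t)*x)) * Real.exp (-((b₂+a₂*t)*y))) := by
          apply lintegral_lintegral_swap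
          apply Measurable.aemeasurable
          fun_prop
      _ = ∫⁻ t in Ioi (0:ℝ),
            ENNReal.ofReal (1/(b₁+a₁*t)) * ENNReal.ofReal (Real.exp (-((b₂+a₂*t)*y))) := by
          refine setLIntegral_congr_fun measurableSet_Ioi ?_
          intro t ht
          have hbt : 0 < b₁ + a₁*t := by have := ht.out; positivity
          simp_rw [ENNReal.ofReal_mul (exp_pos _).le,
            lintegral_mul_const' _ _ ENNReal.ofReal_ne_top, lint_exp _ hbt]
  rw [step1]
  rw [lintegral_lintegral_swap (by apply Measurable.aemeasurable; fun_prop)]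
  refine setLIntegral_congr_fun measurableSet_Ioi ?_
  intro t ht
  have hbt : 0 < b₁ + a₁*t := by have := ht.out; positivity
  have hbt2 : 0 < b₂ + a₂*t := by have := ht.out; positivity
  beta_reduce
  rw [lintegral_const_mul' _ _ ENNReal.ofReal_ne_top, lint_exp _ hbt2,
    ← ENNReal.ofReal_mul (by positivity)]
  rw [div_mul_div_comm, one_mul]
  ring_nf

theorem quadrant_to_single (a₁ a₂ b₁ b₂ : ℝ)
    (ha₁ : 0 < a₁) (ha₂ : 0 < a₂) (hb₁ : 0 < b₁) (hb₂ : 0 < b₂) :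
    (∫ y in Set.Ioi (0:ℝ), ∫ x in Set.Ioi (0:ℝ),
        Real.exp (-b₁ * x - b₂ * y) / (a₁ * x + a₂ * y))
      = ∫ x in Set.Ioi (0:ℝ), 1 / ((a₁ * x + b₁) * (a₂ * x + b₂)) := by
  set F : ℝ → ℝ → ℝ := fun x y => Real.exp (-b₁ * x - b₂ * y) / (a₁ * x + a₂ * y) with hF
  have hFmeas : Measurable (fun p : ℝ × ℝ => F p.1 p.2) := by
    unfold F; fun_prop
  set L : ℝ → ENNReal := fun y => ∫⁻ x in Ioi (0:ℝ), ENNReal.ofReal (F x y) with hL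
  have hLmeas : Measurable L := by
    apply Measurable.lintegral_prod_right (f := fun y x => ENNReal.ofReal (F x y))
    exact (measurable_swap_iff.mpr hFmeas).ennreal_ofReal
  -- finiteness of L y for y > 0
  have hLfin : ∀ y : ℝ, y ∈ Ioi (0:ℝ) → L y < ⊤ := by
    intro y hy
    have hy' : (0:ℝ) < y := hy
    have hbound : L y ≤ ∫⁻ x in Ioi (0:ℝ),
        ENNReal.ofReal (Real.exp (-(b₁*x))) * ENNReal.ofReal (1/(a₂*y)) := by
      apply lintegral_mono_ae
      filter_upwards [ae_restrict_mem measurableSet_Ioi] with x hx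
      rw [← ENNReal.ofReal_mul (exp_pos _).le]
      apply ENNReal.ofReal_le_ofReal
      have hx' : (0:ℝ) < x := hx
      rw [mul_one_div]
      apply div_le_div₀ (by positivity) _ (by positivity) (by nlinarith)
      calc Real.exp (-b₁*x - b₂*y) ≤ Real.exp (-b₁*x) := by
            apply Real.exp_le_exp.2; nlinarith
        _ = Real.exp (-(b₁*x)) := by ring_nf
    refine lt_of_le_of_lt hbound ?_
    rw [lintegral_mul_const' _ _ ENNReal.ofReal_ne_top, lint_exp _ hb₁]
    exact ENNReal.mul_lt_top ENNReal.ofReal_lt_top ENNReal.ofReal_lt_top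
  -- inner Bochner integral equals toReal of L
  have hinner : ∀ y ∈ Ioi (0:ℝ), (∫ x in Ioi (0:ℝ), F x y) = (L y).toReal := by
    intro y hy
    have hy' : (0:ℝ) < y := hy
    apply integral_eq_lintegral_of_nonneg_ae
    · filter_upwards [ae_restrict_mem measurableSet_Ioi] with x hx
      have hx' : (0:ℝ) < x := hx
      unfold F
      positivity
    · exact (hFmeas.comp (measurable_id.prodMk measurable_const)).aestronglyMeasurable
  -- LHS conversion
  have hLHS : (∫ y in Ioi (0:ℝ), ∫ x in Ioi (0:ℝ), F x y)
      = (∫⁻ y in Ioi (0:ℝ), L y).toReal := by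
    rw [setIntegral_congr_fun measurableSet_Ioi hinner]
    rw [integral_eq_lintegral_of_nonneg_ae
      (Filter.Eventually.of_forall fun y => ENNReal.toReal_nonneg)
      (hLmeas.ennreal_toReal).aestronglyMeasurable]
    congr 1
    apply lintegral_congr_ae
    filter_upwards [ae_restrict_mem measurableSet_Ioi] with y hy
    exact ENNReal.ofReal_toReal (hLfin y hy).ne
  -- RHS conversion
  have hRHS : (∫ x in Ioi (0:ℝ), 1 / ((a₁ * x + b₁) * (a₂ * x + b₂)))
      = (∫⁻ x in Ioi (0:ℝ), ENNReal.ofReal (1/((a₁*x+b₁)*(a₂*x+b₂)))).toReal := by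
    apply integral_eq_lintegral_of_nonneg_ae
    · filter_upwards [ae_restrict_mem measurableSet_Ioi] with x hx
      have hx' : (0:ℝ) < x := hx
      positivity
    · apply Measurable.aestronglyMeasurable; fun_prop
  rw [hLHS, hRHS, key a₁ a₂ b₁ b₂ ha₁ ha₂ hb₁ hb₂]
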